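/- Let G be a walk-regular graph with d+1 distinct eigenvalues θ_0 > ... > θ_d (multiplicities m_i) and diameter d, and let π_i = Π_{j ≠ i} |θ_i − θ_j|. Then for every odd index 2i−1 with 1 ≤ 2i−1 ≤ d, α_{d−1}(G) ≤ 1 + m_{2i−1} and α_{d−1}(G) ≤ 1 + m_{2i−1}·π_{2i−1}/π_0. -/

import Mathlib

open Matrix Polynomial

/-- The `k`-independence number of a graph. -/
noncomputable def kIndepNum {V : Type*} [Fintype V] (G : SimpleGraph V) (k : ℕ) : ℕ :=
  sSup {r | ∃ s : Finset V, s.card = r ∧ ∀ u ∈ s, ∀ v ∈ s, u ≠ v → k < G.dist u v}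

section Aux

variable {n : Type*} [Fintype n] [DecidableEq n]

/-- Conjugation by a (real) orthogonal matrix as an algebra homomorphism. -/
noncomputable def conjAlgHom (U : Matrix n n ℝ) (hU1 : U * Uᵀ = 1) (hU2 : Uᵀ * U = 1) :
    Matrix n n ℝ →ₐ[ℝ] Matrix n n ℝ where
  toFun X := U * X * Uᵀ
  map_one' := by show U * 1 * Uᵀ = 1; rw [Matrix.mul_one, hU1]
  map_mul' X Y := by
    show U * (X * Y) * Uᵀ = (U * X * Uᵀ) * (U * Y * Uᵀ)
    simp only [Matrix.mul_assoc]
    rw [← Matrix.mul_assoc Uᵀ U, hU2, Matrix.one_mul]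
  map_zero' := by show U * 0 * Uᵀ = 0; simp
  map_add' X Y := by
    show U * (X + Y) * Uᵀ = U * X * Uᵀ + U * Y * Uᵀ
    rw [Matrix.mul_add, Matrix.add_mul]
  commutes' r := by
    show U * algebraMap ℝ (Matrix n n ℝ) r * Uᵀ = algebraMap ℝ (Matrix n n ℝ) r
    simp only [Algebra.algebraMap_eq_smul_one, Matrix.mul_smul, Matrix.smul_mul,
      Matrix.mul_one, hU1]

lemma aeval_diagonal (g : n → ℝ) (q : ℝ[X]) :
    aeval (Matrix.diagonal g) q = Matrix.diagonal (fun k => eval (g k) q) := by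
  induction q using Polynomial.induction_on' with
  | add p r hp hr =>
    rw [map_add, hp, hr, Matrix.diagonal_add]
    exact congrArg _ (funext fun k => (eval_add).symm)
  | monomial k a =>
    rw [aeval_monomial, Matrix.diagonal_pow, Matrix.algebraMap_eq_diagonal,
      Matrix.diagonal_mul_diagonal]
    congr 1
    funext j
    simp [eval_monomial]

lemma aeval_conj (U : Matrix n n ℝ) (hU1 : U * Uᵀ = 1) (hU2 : Uᵀ * U = 1)
    (g : n → ℝ) (q : ℝ[X]) :
    aeval (U * Matrix.diagonal g * Uᵀ) q
      = U * Matrix.diagonal (fun k => eval (g k) q) * Uᵀ := by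
  have h := Polynomial.aeval_algHom_apply (conjAlgHom U hU1 hU2) (Matrix.diagonal g) q
  have h2 : conjAlgHom U hU1 hU2 (Matrix.diagonal g) = U * Matrix.diagonal g * Uᵀ := rfl
  rw [h2] at h
  rw [h, aeval_diagonal]
  rfl

lemma conj_entry (U : Matrix n n ℝ) (g : n → ℝ) (u v : n) :
    (U * Matrix.diagonal g * Uᵀ) u v = ∑ k, g k * (U u k * U v k) := by
  rw [Matrix.mul_apply]
  refine Finset.sum_congr rfl fun k _ => ?_
  rw [Matrix.mul_diagonal, Matrix.transpose_apply]
  ring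

lemma conj_trace (U : Matrix n n ℝ) (hU2 : Uᵀ * U = 1) (g : n → ℝ) :
    Matrix.trace (U * Matrix.diagonal g * Uᵀ) = ∑ k, g k := by
  rw [Matrix.trace_mul_cycle, hU2, Matrix.one_mul, Matrix.trace_diagonal]

lemma charpoly_conj (U B : Matrix n n ℝ) (hU1 : U * Uᵀ = 1) (hU2 : Uᵀ * U = 1) :
    (U * B * Uᵀ).charpoly = B.charpoly := by
  unfold Matrix.charpoly
  have hC : ∀ M N : Matrix n n ℝ, (M * N).map (C : ℝ →+* ℝ[X]) = M.map C * N.map C := by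
    intro M N
    exact Matrix.map_mul
  have hone : ((1 : Matrix n n ℝ).map (C : ℝ →+* ℝ[X])) = 1 :=
    Matrix.map_one _ (map_zero C) (map_one C)
  have key : charmatrix (U * B * Uᵀ) = (U.map C) * charmatrix B * (Uᵀ.map C) := by
    unfold Matrix.charmatrix
    simp only [RingHom.mapMatrix_apply]
    rw [Matrix.mul_sub, Matrix.sub_mul]
    congr 1
    · -- scalar X = U.map C * scalar X * Uᵀ.map C
      rw [← Matrix.scalar_commute X (fun r => (Commute.all _ _)) (U.map C), Matrix.mul_assoc,
        ← hC, hU1, hone, Matrix.mul_one]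
    · rw [hC, hC]
  rw [key, Matrix.det_mul, Matrix.det_mul, mul_comm, ← mul_assoc, ← Matrix.det_mul, ← hC, hU2,
    hone, Matrix.det_one, one_mul]

lemma charpoly_diagonal (g : n → ℝ) :
    (Matrix.diagonal g).charpoly = ∏ k, (X - C (g k)) := by
  unfold Matrix.charpoly
  have : charmatrix (Matrix.diagonal g) = Matrix.diagonal (fun k => X - C (g k)) := by
    refine Matrix.ext fun i j => ?_
    by_cases h : i = j
    · subst h; rw [charmatrix_apply_eq]; simp
    · rw [charmatrix_apply_ne _ _ _ h, Matrix.diagonal_apply_ne _ h,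
        Matrix.diagonal_apply_ne _ h, map_zero, neg_zero]
  rw [this, Matrix.det_diagonal]

/-- Vectors with pairwise negative inner products: at most `dim + 1` of them. -/
lemma card_le_of_pairwise_neg {ι K : Type*} [Fintype ι] [Fintype K] [DecidableEq ι]
    (x : ι → K → ℝ) (h : ∀ a b : ι, a ≠ b → (∑ k, x a k * x b k) < 0) :
    Fintype.card ι ≤ Fintype.card K + 1 := by
  rcases isEmpty_or_nonempty ι with hι | hι
  · simp [Fintype.card_eq_zero]
  obtain ⟨a₀⟩ := hι
  have hli : LinearIndependent ℝ (fun a : {a : ι // a ≠ a₀} => x a.1) := by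
    rw [Fintype.linearIndependent_iff]
    intro c hc
    set pos : {a : ι // a ≠ a₀} → ℝ := fun a => max (c a) 0 with hpos
    set neg : {a : ι // a ≠ a₀} → ℝ := fun a => max (-c a) 0 with hneg
    have hposn : ∀ a, c a = pos a - neg a := by
      intro a
      simp only [hpos, hneg]
      rcases le_total (c a) 0 with h' | h'
      · rw [max_eq_right h', max_eq_left (by linarith : (0:ℝ) ≤ -c a)]; ring
      · rw [max_eq_left h', max_eq_right (by linarith : -c a ≤ 0)]; ring
    have hpos0 : ∀ a, 0 ≤ pos a := fun a => le_max_right _ _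
    have hneg0 : ∀ a, 0 ≤ neg a := fun a => le_max_right _ _
    have hprod0 : ∀ a, pos a * neg a = 0 := by
      intro a
      rcases le_total (c a) 0 with h' | h'
      · have hp0 : pos a = 0 := by simp only [hpos]; exact max_eq_right h'
        rw [hp0, zero_mul]
      · have hn0 : neg a = 0 := by
          simp only [hneg]; exact max_eq_right (by linarith)
        rw [hn0, mul_zero]
    have hzsum : ∀ k, (∑ a : {a : ι // a ≠ a₀}, pos a * x a.1 k)
        = ∑ a : {a : ι // a ≠ a₀}, neg a * x a.1 k := by
      intro k
      have hck := congrFun hc k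
      simp only [Finset.sum_apply, Pi.smul_apply, smul_eq_mul, Pi.zero_apply] at hck
      have hsum : ∑ a : {a : ι // a ≠ a₀}, (pos a - neg a) * x a.1 k = 0 := by
        rw [← hck]
        exact Finset.sum_congr rfl fun a _ => by rw [← hposn]
      simp only [sub_mul] at hsum
      rw [Finset.sum_sub_distrib] at hsum
      linarith
    have hexpand : ∀ w w' : {a : ι // a ≠ a₀} → ℝ,
        (∑ k, (∑ a : {a : ι // a ≠ a₀}, w a * x a.1 k)
            * (∑ b : {a : ι // a ≠ a₀}, w' b * x b.1 k))
          = ∑ a : {a : ι // a ≠ a₀}, ∑ b : {a : ι // a ≠ a₀},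
              w a * w' b * (∑ k, x a.1 k * x b.1 k) := by
      intro w w'
      calc (∑ k, (∑ a : {a : ι // a ≠ a₀}, w a * x a.1 k)
            * (∑ b : {a : ι // a ≠ a₀}, w' b * x b.1 k))
          = ∑ k, ∑ a : {a : ι // a ≠ a₀}, ∑ b : {a : ι // a ≠ a₀},
              (w a * x a.1 k) * (w' b * x b.1 k) := by
            refine Finset.sum_congr rfl fun k _ => ?_
            rw [Finset.sum_mul_sum]
        _ = ∑ a : {a : ι // a ≠ a₀}, ∑ k, ∑ b : {a : ι // a ≠ a₀},
              (w a * x a.1 k) * (w' b * x b.1 k) := Finset.sum_comm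
        _ = ∑ a : {a : ι // a ≠ a₀}, ∑ b : {a : ι // a ≠ a₀},
              ∑ k, (w a * x a.1 k) * (w' b * x b.1 k) := by
            exact Finset.sum_congr rfl fun a _ => Finset.sum_comm
        _ = ∑ a : {a : ι // a ≠ a₀}, ∑ b : {a : ι // a ≠ a₀},
              w a * w' b * (∑ k, x a.1 k * x b.1 k) := by
            refine Finset.sum_congr rfl fun a _ => Finset.sum_congr rfl fun b _ => ?_
            rw [Finset.mul_sum]
            exact Finset.sum_congr rfl fun k _ => by ring
    have hS : (∑ k, (∑ a : {a : ι // a ≠ a₀}, pos a * x a.1 k)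
        * (∑ b : {a : ι // a ≠ a₀}, neg b * x b.1 k)) ≤ 0 := by
      rw [hexpand]
      refine Finset.sum_nonpos fun a _ => Finset.sum_nonpos fun b _ => ?_
      by_cases hab : a = b
      · subst hab; rw [hprod0, zero_mul]
      · have hlt := h a.1 b.1 (fun hh => hab (Subtype.ext hh))
        exact mul_nonpos_of_nonneg_of_nonpos (mul_nonneg (hpos0 a) (hneg0 b)) (le_of_lt hlt)
    have hSsq : (∑ k, (∑ a : {a : ι // a ≠ a₀}, pos a * x a.1 k)
        * (∑ b : {a : ι // a ≠ a₀}, neg b * x b.1 k))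
        = ∑ k, (∑ a : {a : ι // a ≠ a₀}, pos a * x a.1 k)
            * (∑ a : {a : ι // a ≠ a₀}, pos a * x a.1 k) := by
      refine Finset.sum_congr rfl fun k _ => ?_
      rw [hzsum k]
    have hz0 : ∀ k, (∑ a : {a : ι // a ≠ a₀}, pos a * x a.1 k) = 0 := by
      have h1 : (∑ k, (∑ a : {a : ι // a ≠ a₀}, pos a * x a.1 k)
          * (∑ a : {a : ι // a ≠ a₀}, pos a * x a.1 k)) = 0 := by
        apply le_antisymm
        · rw [← hSsq]; exact hS
        · exact Finset.sum_nonneg fun k _ => mul_self_nonneg _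
      intro k
      exact mul_self_eq_zero.1 ((Finset.sum_eq_zero_iff_of_nonneg
        (fun k _ => mul_self_nonneg _)).1 h1 k (Finset.mem_univ k))
    have hipy : ∀ w : {a : ι // a ≠ a₀} → ℝ, (∀ a, 0 ≤ w a) →
        (∑ k, (∑ a : {a : ι // a ≠ a₀}, w a * x a.1 k) * x a₀ k) = 0 → ∀ a, w a = 0 := by
      intro w hw hww a
      have hexp : (∑ k, (∑ a : {a : ι // a ≠ a₀}, w a * x a.1 k) * x a₀ k)
          = ∑ a : {a : ι // a ≠ a₀}, w a * (∑ k, x a.1 k * x a₀ k) := by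
        calc (∑ k, (∑ a : {a : ι // a ≠ a₀}, w a * x a.1 k) * x a₀ k)
            = ∑ k, ∑ a : {a : ι // a ≠ a₀}, (w a * x a.1 k) * x a₀ k := by
              exact Finset.sum_congr rfl fun k _ => Finset.sum_mul _ _ _
          _ = ∑ a : {a : ι // a ≠ a₀}, ∑ k, (w a * x a.1 k) * x a₀ k := Finset.sum_comm
          _ = ∑ a : {a : ι // a ≠ a₀}, w a * (∑ k, x a.1 k * x a₀ k) := by
              refine Finset.sum_congr rfl fun a _ => ?_
              rw [Finset.mul_sum]
              exact Finset.sum_congr rfl fun k _ => by ring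
      rw [hexp] at hww
      have hterm : ∀ a : {a : ι // a ≠ a₀}, w a * (∑ k, x a.1 k * x a₀ k) ≤ 0 :=
        fun a => mul_nonpos_of_nonneg_of_nonpos (hw a) (le_of_lt (h a.1 a₀ a.2))
      have h0 := (Finset.sum_eq_zero_iff_of_nonpos (fun a _ => hterm a)).1 hww a
        (Finset.mem_univ a)
      rcases mul_eq_zero.1 h0 with h' | h'
      · exact h'
      · exact absurd h' (ne_of_lt (h a.1 a₀ a.2))
    have hposz : ∀ a, pos a = 0 := by
      refine hipy pos hpos0 (Finset.sum_eq_zero fun k _ => by rw [hz0 k, zero_mul])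
    have hnegz : ∀ a, neg a = 0 := by
      refine hipy neg hneg0 (Finset.sum_eq_zero fun k _ => by rw [← hzsum k, hz0 k, zero_mul])
    intro a
    rw [hposn a, hposz a, hnegz a, sub_zero]
  have hcard := LinearIndependent.fintype_card_le_finrank hli
  rw [Module.finrank_pi] at hcard
  have : Fintype.card {a : ι // a ≠ a₀} = Fintype.card ι - 1 := by
    rw [Fintype.card_subtype_compl fun a : ι => a = a₀]
    simp [Fintype.card_subtype_eq]
  omega

end Aux

section Graph

variable {V : Type*} [Fintype V] [DecidableEq V] (G : SimpleGraph V) [DecidableRel G.Adj]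

lemma constant_on_reachable {k : ℕ} (hreg : ∀ v, G.degree v = k) (f : V → ℝ)
    (hf : G.adjMatrix ℝ *ᵥ f = (k : ℝ) • f) {u v : V} (h : G.Reachable u v) :
    f u = f v := by
  classical
  set R : Finset V := Finset.univ.filter (fun x => G.Reachable u x) with hR
  have hmemR : ∀ x, x ∈ R ↔ G.Reachable u x := by
    intro x; simp [hR]
  have hune : u ∈ R := (hmemR u).2 (SimpleGraph.Reachable.refl u)
  have hRne : R.Nonempty := ⟨u, hune⟩
  set M := R.sup' hRne f with hM
  obtain ⟨x₀, hx₀R, hx₀⟩ := Finset.exists_mem_eq_sup' hRne f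
  have hle : ∀ x ∈ R, f x ≤ M := fun x hx => Finset.le_sup' f hx
  have step : ∀ x, G.Reachable u x → f x = M → ∀ y, G.Adj x y → f y = M := by
    intro x hux hfx y hxy
    have hAf : (∑ z ∈ G.neighborFinset x, f z) = k * f x := by
      have h1 := congrFun hf x
      rw [SimpleGraph.adjMatrix_mulVec_apply] at h1
      simpa using h1
    have hreach : ∀ z ∈ G.neighborFinset x, G.Reachable u z := by
      intro z hz
      rw [SimpleGraph.mem_neighborFinset] at hz
      exact hux.trans hz.reachable
    have hnb : ∀ z ∈ G.neighborFinset x, f z ≤ M := fun z hz =>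
      hle z ((hmemR z).2 (hreach z hz))
    have hcard : (G.neighborFinset x).card = k := by
      rw [← hreg x]; exact G.card_neighborFinset_eq_degree x
    have hsum : ∑ z ∈ G.neighborFinset x, (M - f z) = 0 := by
      rw [Finset.sum_sub_distrib, Finset.sum_const, hcard, hAf, hfx, nsmul_eq_mul]
      ring
    have hall : ∀ z ∈ G.neighborFinset x, M - f z = 0 :=
      (Finset.sum_eq_zero_iff_of_nonneg (fun z hz => by linarith [hnb z hz])).1 hsum
    have hy : y ∈ G.neighborFinset x := (SimpleGraph.mem_neighborFinset _ _ _).2 hxy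
    linarith [hall y hy]
  have main : ∀ (a b : V) (_ : G.Walk a b), G.Reachable u a → f a = M → f b = M := by
    intro a b p
    induction p with
    | nil => exact fun _ h => h
    | @cons s t b hadj q ih =>
      intro hus hfs
      exact ih (hus.trans hadj.reachable) (step s hus hfs t hadj)
  have hux₀ : G.Reachable u x₀ := (hmemR x₀).1 hx₀R
  have hfu : f u = M := by
    obtain ⟨p⟩ := hux₀.symm
    exact main x₀ u p hux₀ hx₀.symm
  have hfv : f v = M := by
    obtain ⟨p⟩ := hux₀.symm.trans h
    exact main x₀ v p hux₀ hx₀.symm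
  rw [hfu, hfv]

lemma eig_le_degree {k : ℕ} (hreg : ∀ v, G.degree v = k) (μ : ℝ) (f : V → ℝ)
    (hf0 : f ≠ 0) (hf : G.adjMatrix ℝ *ᵥ f = μ • f) : μ ≤ k := by
  classical
  have hne : (Finset.univ : Finset V).Nonempty := by
    obtain ⟨x, hx⟩ := Function.ne_iff.1 hf0
    exact ⟨x, Finset.mem_univ x⟩
  obtain ⟨x₀, -, hx₀⟩ := Finset.exists_mem_eq_sup' hne (fun x => |f x|)
  set M := Finset.univ.sup' hne (fun x => |f x|) with hM
  have hle : ∀ x, |f x| ≤ M := fun x => by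
    rw [hM]; exact Finset.le_sup' (fun x => |f x|) (Finset.mem_univ x)
  have hMpos : 0 < M := by
    obtain ⟨x, hx⟩ := Function.ne_iff.1 hf0
    have : 0 < |f x| := abs_pos.2 hx
    linarith [hle x]
  have h1 := congrFun hf x₀
  rw [SimpleGraph.adjMatrix_mulVec_apply] at h1
  have h1' : μ * f x₀ = ∑ z ∈ G.neighborFinset x₀, f z := by
    have h2 := h1.symm
    simpa using h2
  have hMpos' : 0 < |f x₀| := by rw [← hx₀]; exact hMpos
  have h2 : |μ| * |f x₀| ≤ (k : ℝ) * |f x₀| := by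
    calc |μ| * |f x₀| = |μ * f x₀| := (abs_mul _ _).symm
      _ = |∑ z ∈ G.neighborFinset x₀, f z| := by rw [h1']
      _ ≤ ∑ z ∈ G.neighborFinset x₀, |f z| := Finset.abs_sum_le_sum_abs _ _
      _ ≤ ∑ _z ∈ G.neighborFinset x₀, M := Finset.sum_le_sum fun z _ => hle z
      _ = (k : ℝ) * M := by
          rw [Finset.sum_const, nsmul_eq_mul, G.card_neighborFinset_eq_degree, hreg]
      _ = (k : ℝ) * |f x₀| := by rw [← hx₀]
  have h3 : |μ| ≤ k := le_of_mul_le_mul_right h2 hMpos'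
  calc μ ≤ |μ| := le_abs_self μ
    _ ≤ k := h3

end Graph

/-- **Theorem (odd indices).** Let `G` be walk-regular with `d+1` distinct eigenvalues
`θ_0 > ⋯ > θ_d` (multiplicities `m_i`) and diameter `d`, and let
`π_i = Π_{j ≠ i} |θ_i − θ_j|`. Then for every odd index `2i−1` with `1 ≤ 2i−1 ≤ d`,
`α_{d−1}(G) ≤ 1 + m_{2i−1}` and `α_{d−1}(G) ≤ 1 + m_{2i−1}·π_{2i−1}/π_0`. -/
theorem stmt13 {V : Type*} [Fintype V] [DecidableEq V] (G : SimpleGraph V)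
    [DecidableRel G.Adj] (d : ℕ) (hd : 1 ≤ d)
    (θ : Fin (d + 1) → ℝ) (hθ : StrictAnti θ) (m : Fin (d + 1) → ℕ)
    (hroots : (G.adjMatrix ℝ).charpoly.roots =
      Finset.univ.val.bind fun i => Multiset.replicate (m i) (θ i))
    (hwr : ∀ p : Polynomial ℝ, ∀ u v : V,
      (Polynomial.aeval (G.adjMatrix ℝ) p) u u = (Polynomial.aeval (G.adjMatrix ℝ) p) v v)
    (hdiam : (∀ u v : V, G.dist u v ≤ d) ∧ ∃ u v : V, G.dist u v = d) :
    ∀ i : Fin (d + 1), Odd (i : ℕ) →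
      kIndepNum G (d - 1) ≤ 1 + m i ∧
      (kIndepNum G (d - 1) : ℝ) ≤ 1 + (m i : ℝ) *
        (∏ j ∈ Finset.univ.erase i, |θ i - θ j|) /
        (∏ j ∈ Finset.univ.erase (0 : Fin (d + 1)), |θ 0 - θ j|) := by
  classical
  intro i hodd
  obtain ⟨hdle, u₀, v₀, huv₀⟩ := hdiam
  have hV : Nonempty V := ⟨u₀⟩
  set A := G.adjMatrix ℝ with hAdef
  have hA : A.IsHermitian := by
    rw [Matrix.IsHermitian, Matrix.conjTranspose_eq_transpose_of_trivial]
    exact G.isSymm_adjMatrix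
  set U : Matrix V V ℝ := (hA.eigenvectorUnitary : Matrix V V ℝ) with hUdef
  set eig : V → ℝ := hA.eigenvalues with heigdef
  have hU2 : Uᵀ * U = 1 := by
    have h := hA.eigenvectorUnitary.2.1
    rwa [Matrix.star_eq_conjTranspose, Matrix.conjTranspose_eq_transpose_of_trivial] at h
  have hU1 : U * Uᵀ = 1 := by
    have h := hA.eigenvectorUnitary.2.2
    rwa [Matrix.star_eq_conjTranspose, Matrix.conjTranspose_eq_transpose_of_trivial] at h
  have hspec : A = U * Matrix.diagonal eig * Uᵀ := by
    have h := hA.spectral_theorem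
    rwa [Unitary.conjStarAlgAut_apply, Matrix.star_eq_conjTranspose, Matrix.conjTranspose_eq_transpose_of_trivial,
      RCLike.ofReal_real_eq_id, Function.id_comp] at h
  have hn : (0:ℝ) < (Fintype.card V : ℝ) := by
    have : 0 < Fintype.card V := Fintype.card_pos
    exact_mod_cast this
  -- aeval formulas
  have haev : ∀ q : ℝ[X], aeval A q = U * Matrix.diagonal (fun k => eval (eig k) q) * Uᵀ := by
    intro q; rw [hspec]; exact aeval_conj U hU1 hU2 eig q
  have hent : ∀ q : ℝ[X], ∀ u v : V,
      (aeval A q) u v = ∑ k, eval (eig k) q * (U u k * U v k) := by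
    intro q u v; rw [haev q]; exact conj_entry U _ u v
  have htr : ∀ q : ℝ[X], ∀ u : V,
      (aeval A q) u u * (Fintype.card V : ℝ) = ∑ kk, eval (eig kk) q := by
    intro q u
    have hsum : ∑ v : V, (aeval A q) v v = ∑ kk, eval (eig kk) q := by
      calc ∑ v : V, (aeval A q) v v
          = Matrix.trace (U * Matrix.diagonal (fun kk => eval (eig kk) q) * Uᵀ) := by
            simp only [Matrix.trace, Matrix.diag]
            exact Finset.sum_congr rfl fun v _ => by rw [haev q]
        _ = ∑ kk, eval (eig kk) q := conj_trace U hU2 _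
    calc (aeval A q) u u * (Fintype.card V : ℝ)
        = ∑ _v : V, (aeval A q) u u := by
          rw [Finset.sum_const, nsmul_eq_mul, Finset.card_univ]; ring
      _ = ∑ v : V, (aeval A q) v v := Finset.sum_congr rfl fun v _ => (hwr q u v)
      _ = ∑ kk, eval (eig kk) q := hsum
  -- charpoly roots vs eigenvalues
  have hchar : A.charpoly = ∏ k, (X - C (eig k)) := by
    rw [hspec, charpoly_conj U _ hU1 hU2, _root_.charpoly_diagonal]
  have hrootsA : A.charpoly.roots = Finset.univ.val.map eig := by
    rw [hchar]
    have h1 : (∏ k, (X - C (eig k)))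
        = ((Finset.univ.val.map eig).map (fun a => X - C a)).prod := by
      rw [Finset.prod_eq_multiset_prod, Multiset.map_map]
      rfl
    rw [h1, Polynomial.roots_multiset_prod_X_sub_C]
  have hMS : Finset.univ.val.map eig
      = Finset.univ.val.bind (fun l => Multiset.replicate (m l) (θ l)) := by
    rw [← hrootsA]; exact hroots
  have hθinj := hθ.injective
  have hmemθ : ∀ k : V, ∃ j, m j ≠ 0 ∧ eig k = θ j := by
    intro k
    have hk : eig k ∈ Finset.univ.val.map eig :=
      Multiset.mem_map_of_mem _ (Finset.mem_univ k)
    rw [hMS] at hk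
    obtain ⟨j, _, hmem⟩ := Multiset.mem_bind.1 hk
    have hrep := Multiset.mem_replicate.1 hmem
    exact ⟨j, hrep.1, hrep.2⟩
  have hcount : ∀ j, (Finset.univ.filter (fun kk : V => eig kk = θ j)).card = m j := by
    intro j
    have h1 : Multiset.count (θ j) (Finset.univ.val.map eig)
        = Multiset.count (θ j)
          (Finset.univ.val.bind fun l => Multiset.replicate (m l) (θ l)) := by rw [hMS]
    rw [Multiset.count_bind] at h1
    have h2 : (Multiset.map (fun l => Multiset.count (θ j) (Multiset.replicate (m l) (θ l)))
        Finset.univ.val).sum = m j := by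
      have hcr : ∀ l : Fin (d+1),
          Multiset.count (θ j) (Multiset.replicate (m l) (θ l)) = if l = j then m l else 0 := by
        intro l
        rw [Multiset.count_replicate]
        by_cases h : l = j
        · subst h; simp
        · rw [if_neg (fun hh => h (hθinj hh)), if_neg h]
      calc (Multiset.map (fun l => Multiset.count (θ j) (Multiset.replicate (m l) (θ l)))
          Finset.univ.val).sum
          = ∑ l : Fin (d+1), if l = j then m l else 0 := by
            rw [Finset.sum_eq_multiset_sum]
            exact congrArg Multiset.sum (Multiset.map_congr rfl fun l _ => hcr l)
        _ = m j := by rw [Finset.sum_ite_eq' Finset.univ j m, if_pos (Finset.mem_univ j)]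
    have h3 : Multiset.count (θ j) (Finset.univ.val.map eig)
        = (Finset.univ.filter (fun kk : V => eig kk = θ j)).card := by
      rw [Multiset.count_map]
      have : Multiset.filter (fun a => θ j = eig a) Finset.univ.val
          = Multiset.filter (fun kk : V => eig kk = θ j) Finset.univ.val :=
        Multiset.filter_congr fun x _ => eq_comm
      rw [this]
      rfl
    rw [h3] at h1
    rw [h1, h2]
  -- powers and walks
  have hApowlt : ∀ (l : ℕ) (u v : V), l < G.dist u v → (A ^ l) u v = 0 := by
    intro l u v hl
    rw [hAdef, SimpleGraph.adjMatrix_pow_apply_eq_card_walk]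
    have hie : IsEmpty {p : G.Walk u v | p.length = l} := by
      constructor
      rintro ⟨p, hp⟩
      have hle := SimpleGraph.dist_le p
      simp only [Set.mem_setOf_eq] at hp
      omega
    rw [Fintype.card_eq_zero]
    simp
  have hApos : ∀ u v : V, G.dist u v = d → (1:ℝ) ≤ (A ^ d) u v := by
    intro u v hdist
    have hreach : G.Reachable u v := SimpleGraph.Reachable.of_dist_ne_zero (by omega)
    obtain ⟨p, hp⟩ := hreach.exists_walk_length_eq_dist
    rw [hAdef, SimpleGraph.adjMatrix_pow_apply_eq_card_walk]
    have hne : Nonempty {q : G.Walk u v | q.length = d} := ⟨⟨p, by simp [hp, hdist]⟩⟩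
    have hpos := Fintype.card_pos (α := {q : G.Walk u v | q.length = d})
    exact_mod_cast hpos
  have hpowent : ∀ q : ℝ[X], q.Monic → q.natDegree = d → ∀ u v : V,
      G.dist u v = d → (aeval A q) u v = (A ^ d) u v := by
    intro q hm hdeg u v hdist
    rw [Polynomial.aeval_eq_sum_range, hdeg]
    rw [Matrix.sum_apply]
    have hterm : ∀ l ∈ Finset.range (d+1),
        (q.coeff l • A ^ l) u v = q.coeff l * (A ^ l) u v := by
      intro l _
      simp [Matrix.smul_apply]
    rw [Finset.sum_congr rfl hterm, Finset.sum_range_succ]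
    have hzero : ∀ l ∈ Finset.range d, q.coeff l * (A ^ l) u v = 0 := by
      intro l hl
      rw [hApowlt l u v (by rw [hdist]; exact Finset.mem_range.1 hl), mul_zero]
    rw [Finset.sum_eq_zero hzero, zero_add]
    have hlead : q.coeff d = 1 := by
      have := hm.coeff_natDegree
      rwa [hdeg] at this
    rw [hlead, one_mul]
  -- all multiplicities are positive
  have hm0 : ∀ j, m j ≠ 0 := by
    intro j hj
    have hQeval : ∀ k : V, eval (eig k) (∏ l ∈ Finset.univ.erase j, (X - C (θ l))) = 0 := by
      intro k
      obtain ⟨l, hl, hlk⟩ := hmemθ k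
      have hlj : l ≠ j := fun h => hl (h ▸ hj)
      rw [Polynomial.eval_prod]
      refine Finset.prod_eq_zero (Finset.mem_erase.2 ⟨hlj, Finset.mem_univ l⟩) ?_
      rw [eval_sub, eval_X, eval_C, hlk, sub_self]
    have hz : (aeval A (∏ l ∈ Finset.univ.erase j, (X - C (θ l)))) u₀ v₀ = 0 := by
      rw [hent]
      exact Finset.sum_eq_zero fun k _ => by rw [hQeval k, zero_mul]
    have hmon : (∏ l ∈ Finset.univ.erase j, (X - C (θ l))).Monic :=
      monic_prod_of_monic _ _ fun l _ => monic_X_sub_C (θ l)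
    have hdeg : (∏ l ∈ Finset.univ.erase j, (X - C (θ l))).natDegree = d := by
      rw [Polynomial.natDegree_prod _ _ (fun l _ => X_sub_C_ne_zero (θ l))]
      simp only [Polynomial.natDegree_X_sub_C]
      rw [Finset.sum_const, smul_eq_mul, mul_one,
        Finset.card_erase_of_mem (Finset.mem_univ j), Finset.card_univ, Fintype.card_fin]
      omega
    have h1 := hpowent _ hmon hdeg u₀ v₀ huv₀
    rw [hz] at h1
    have h2 := hApos u₀ v₀ huv₀
    rw [← h1] at h2
    linarith
  -- regularity
  set k₀ : ℕ := G.degree u₀ with hk₀def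
  have hreg : ∀ v, G.degree v = k₀ := by
    intro v
    have hsq : ∀ w : V, (aeval A ((X:ℝ[X])^2)) w w = (G.degree w : ℝ) := by
      intro w
      rw [map_pow, aeval_X, pow_two, hAdef]
      exact_mod_cast G.adjMatrix_mul_self_apply_self w
    have h2 := hwr ((X:ℝ[X])^2) v u₀
    rw [hsq v, hsq u₀] at h2
    exact_mod_cast h2
  -- the all-ones vector is a k₀-eigenvector
  have hone_ev : A *ᵥ (fun _ => (1:ℝ)) = (k₀ : ℝ) • (fun _ => (1:ℝ)) := by
    funext x
    rw [hAdef, SimpleGraph.adjMatrix_mulVec_apply]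
    simp [hreg x]
  -- θ 0 is the degree
  have hcol : ∀ kk : V, A *ᵥ (fun x => U x kk) = eig kk • (fun x => U x kk) := by
    intro kk
    have h2 : (fun x => U x kk) = ⇑(hA.eigenvectorBasis kk) := by
      funext x
      rw [hUdef]
      exact hA.eigenvectorUnitary_apply x kk
    rw [h2]
    exact hA.mulVec_eigenvectorBasis kk
  have hcolne : ∀ kk : V, (fun x => U x kk) ≠ 0 := by
    intro kk hcon
    have hnz := hA.eigenvectorBasis.orthonormal.ne_zero kk
    apply hnz
    ext x
    exact congrFun hcon x
  have hk0le : (k₀ : ℝ) ≤ θ 0 := by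
    have hk0eig : ∃ kk : V, eig kk = (k₀ : ℝ) := by
      by_contra hcon
      push_neg at hcon
      have hDβ : Matrix.diagonal eig *ᵥ (Uᵀ *ᵥ (fun _ => (1:ℝ)))
          = (k₀ : ℝ) • (Uᵀ *ᵥ (fun _ => (1:ℝ))) := by
        have h1 : Uᵀ *ᵥ (A *ᵥ (fun _ => (1:ℝ)))
            = Uᵀ *ᵥ ((k₀:ℝ) • (fun _ => (1:ℝ))) := by rw [hone_ev]
        rw [hspec] at h1
        rw [Matrix.mulVec_mulVec, Matrix.mulVec_smul] at h1
        rw [← Matrix.mul_assoc, ← Matrix.mul_assoc, hU2, Matrix.one_mul] at h1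
        rw [← Matrix.mulVec_mulVec] at h1
        exact h1
      have hβ0 : (Uᵀ *ᵥ (fun _ => (1:ℝ))) = 0 := by
        funext kk
        have h3 := congrFun hDβ kk
        rw [Matrix.mulVec_diagonal] at h3
        simp only [Pi.smul_apply, smul_eq_mul] at h3
        by_contra hne
        exact hcon kk (mul_right_cancel₀ hne h3)
      have h4 : (fun _ => (1:ℝ)) = U *ᵥ (Uᵀ *ᵥ (fun _ => (1:ℝ))) := by
        rw [Matrix.mulVec_mulVec, hU1, Matrix.one_mulVec]
      rw [hβ0, Matrix.mulVec_zero] at h4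
      exact one_ne_zero (congrFun h4 u₀)
    obtain ⟨kk, hkk⟩ := hk0eig
    obtain ⟨j, _, hj⟩ := hmemθ kk
    rw [hj] at hkk
    rw [← hkk]
    exact hθ.antitone (Fin.zero_le j)
  have hθ0eig : ∃ kk : V, eig kk = θ 0 := by
    have hc := hcount 0
    have hpos : 0 < (Finset.univ.filter (fun kk : V => eig kk = θ 0)).card := by
      rw [hc]; exact Nat.pos_of_ne_zero (hm0 0)
    obtain ⟨kk, hkk⟩ := Finset.card_pos.1 hpos
    exact ⟨kk, (Finset.mem_filter.1 hkk).2⟩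
  have hθ0le : θ 0 ≤ (k₀ : ℝ) := by
    obtain ⟨kk, hkk⟩ := hθ0eig
    have := eig_le_degree G hreg (eig kk) (fun x => U x kk) (hcolne kk) (hcol kk)
    rwa [hkk] at this
  have hθ0 : θ 0 = (k₀ : ℝ) := le_antisymm hθ0le hk0le
  -- Perron: columns for θ 0 are constant on components
  have hperron : ∀ kk : V, eig kk = θ 0 → ∀ u v : V, G.Reachable u v → U u kk = U v kk := by
    intro kk hkk u v hr
    refine constant_on_reachable G hreg (fun x => U x kk) ?_ hr
    have := hcol kk
    rwa [hkk, hθ0] at this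
  -- signed and absolute eigenvalue gap products
  set π' : Fin (d+1) → ℝ := fun j => ∏ l ∈ Finset.univ.erase j, (θ j - θ l) with hπ'def
  set πa : Fin (d+1) → ℝ := fun j => ∏ l ∈ Finset.univ.erase j, |θ j - θ l| with hπadef
  have hπapos : ∀ j, 0 < πa j := by
    intro j
    refine Finset.prod_pos fun l hl => abs_pos.2 (sub_ne_zero.2 fun hh => ?_)
    exact (Finset.mem_erase.1 hl).1 (hθinj hh).symm
  have hπ'ne : ∀ j, π' j ≠ 0 := by
    intro j
    refine Finset.prod_ne_zero_iff.2 fun l hl => sub_ne_zero.2 fun hh => ?_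
    exact (Finset.mem_erase.1 hl).1 (hθinj hh).symm
  have hπ'0 : π' 0 = πa 0 := by
    refine Finset.prod_congr rfl fun l hl => ?_
    exact (abs_of_pos (sub_pos.2 (hθ (Fin.pos_of_ne_zero (Finset.mem_erase.1 hl).1)))).symm
  have hπodd : π' i = -πa i := by
    have hsplit : π' i = (-1 : ℝ) ^ (i : ℕ) * πa i := by
      have hfac : ∀ l ∈ Finset.univ.erase i, θ i - θ l =
          (if l < i then (-1:ℝ) else 1) * |θ i - θ l| := by
        intro l hl
        rcases lt_or_gt_of_ne (Finset.mem_erase.1 hl).1 with h' | h'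
        · rw [if_pos h', abs_of_neg (sub_neg.2 (hθ h'))]; ring
        · rw [if_neg (not_lt.2 (le_of_lt h')), one_mul,
            abs_of_pos (sub_pos.2 (hθ h'))]
      calc π' i = ∏ l ∈ Finset.univ.erase i, ((if l < i then (-1:ℝ) else 1) * |θ i - θ l|) :=
            Finset.prod_congr rfl hfac
        _ = (∏ l ∈ Finset.univ.erase i, (if l < i then (-1:ℝ) else 1)) * πa i :=
            Finset.prod_mul_distrib
        _ = (-1 : ℝ) ^ (i : ℕ) * πa i := by
            congr 1
            rw [Finset.prod_ite _ _]
            rw [Finset.prod_const, Finset.prod_const_one, mul_one]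
            congr 1
            have herase : (Finset.univ.erase i).filter (fun l => l < i) = Finset.Iio i := by
              ext l
              simp only [Finset.mem_filter, Finset.mem_erase, Finset.mem_univ, true_and,
                Finset.mem_Iio, and_iff_right_iff_imp]
              exact fun h => ⟨ne_of_lt h, trivial⟩
            rw [herase, Fin.card_Iio]
    rw [hsplit, Odd.neg_one_pow hodd, neg_one_mul]
  -- evaluation of the j-th gap polynomial at eigenvalues
  have hevq : ∀ j : Fin (d+1), ∀ kk : V,
      eval (eig kk) (∏ l ∈ Finset.univ.erase j, (X - C (θ l)))
        = if eig kk = θ j then π' j else 0 := by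
    intro j kk
    rw [Polynomial.eval_prod]
    by_cases h : eig kk = θ j
    · rw [if_pos h, hπ'def]
      exact Finset.prod_congr rfl fun l _ => by rw [eval_sub, eval_X, eval_C, h]
    · rw [if_neg h]
      obtain ⟨l, _, hlk⟩ := hmemθ kk
      have hlj : l ≠ j := fun hh => h (by rw [hlk, hh])
      refine Finset.prod_eq_zero (Finset.mem_erase.2 ⟨hlj, Finset.mem_univ l⟩) ?_
      rw [eval_sub, eval_X, eval_C, hlk, sub_self]
  have hQmonic : ∀ j : Fin (d+1), (∏ l ∈ Finset.univ.erase j, (X - C (θ l))).Monic :=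
    fun j => monic_prod_of_monic _ _ fun l _ => monic_X_sub_C (θ l)
  have hQdeg : ∀ j : Fin (d+1), (∏ l ∈ Finset.univ.erase j, (X - C (θ l))).natDegree = d := by
    intro j
    rw [Polynomial.natDegree_prod _ _ (fun l _ => X_sub_C_ne_zero (θ l))]
    simp only [Polynomial.natDegree_X_sub_C]
    rw [Finset.sum_const, smul_eq_mul, mul_one,
      Finset.card_erase_of_mem (Finset.mem_univ j), Finset.card_univ, Fintype.card_fin]
    omega
  have hQj : ∀ j : Fin (d+1), ∀ u v : V,
      (aeval A (∏ l ∈ Finset.univ.erase j, (X - C (θ l)))) u v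
        = π' j * (∑ kk ∈ Finset.univ.filter (fun kk : V => eig kk = θ j), U u kk * U v kk) := by
    intro j u v
    rw [hent]
    calc ∑ kk, eval (eig kk) (∏ l ∈ Finset.univ.erase j, (X - C (θ l))) * (U u kk * U v kk)
        = ∑ kk, (if eig kk = θ j then π' j * (U u kk * U v kk) else 0) := by
          refine Finset.sum_congr rfl fun kk _ => ?_
          rw [hevq j kk]
          by_cases h : eig kk = θ j
          · rw [if_pos h, if_pos h]
          · rw [if_neg h, if_neg h, zero_mul]
      _ = ∑ kk ∈ Finset.univ.filter (fun kk : V => eig kk = θ j), π' j * (U u kk * U v kk) :=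
          (Finset.sum_filter _ _).symm
      _ = π' j * ∑ kk ∈ Finset.univ.filter (fun kk : V => eig kk = θ j), U u kk * U v kk := by
          rw [Finset.mul_sum]
  have hsumev : ∀ j : Fin (d+1),
      (∑ kk : V, eval (eig kk) (∏ l ∈ Finset.univ.erase j, (X - C (θ l))))
        = π' j * (m j : ℝ) := by
    intro j
    calc (∑ kk : V, eval (eig kk) (∏ l ∈ Finset.univ.erase j, (X - C (θ l))))
        = ∑ kk : V, (if eig kk = θ j then π' j else 0) :=
          Finset.sum_congr rfl fun kk _ => hevq j kk
      _ = ∑ kk ∈ Finset.univ.filter (fun kk : V => eig kk = θ j), π' j :=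
          (Finset.sum_filter _ _).symm
      _ = π' j * (m j : ℝ) := by
          rw [Finset.sum_const, hcount j, nsmul_eq_mul, mul_comm]
  have hipdiag : ∀ j : Fin (d+1), ∀ u : V,
      (∑ kk ∈ Finset.univ.filter (fun kk : V => eig kk = θ j), U u kk * U u kk)
        * (Fintype.card V : ℝ) = (m j : ℝ) := by
    intro j u
    have h1 := htr (∏ l ∈ Finset.univ.erase j, (X - C (θ l))) u
    rw [hQj j u u, hsumev j] at h1
    have h2 : π' j * ((∑ kk ∈ Finset.univ.filter (fun kk : V => eig kk = θ j),
        U u kk * U u kk) * (Fintype.card V : ℝ)) = π' j * (m j : ℝ) := by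
      rw [← mul_assoc]; exact h1
    exact mul_left_cancel₀ (hπ'ne j) h2
  -- the extremal set
  have hSne : ({r : ℕ | ∃ s : Finset V, s.card = r ∧
      ∀ u ∈ s, ∀ v ∈ s, u ≠ v → (d-1) < G.dist u v} : Set ℕ).Nonempty := by
    refine ⟨0, ∅, by simp, by simp⟩
  have hSbdd : BddAbove {r : ℕ | ∃ s : Finset V, s.card = r ∧
      ∀ u ∈ s, ∀ v ∈ s, u ≠ v → (d-1) < G.dist u v} := by
    refine ⟨Fintype.card V, ?_⟩
    rintro r ⟨s, hs, -⟩
    rw [← hs, ← Finset.card_univ]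
    exact Finset.card_le_card (Finset.subset_univ s)
  obtain ⟨S, hScard, hSpair⟩ := Nat.sSup_mem hSne hSbdd
  have hkval : kIndepNum G (d-1) = S.card := by
    rw [kIndepNum, hScard]
  have hSdist : ∀ u ∈ S, ∀ v ∈ S, u ≠ v → G.dist u v = d := by
    intro u hu v hv huv
    have h1 := hSpair u hu v hv huv
    have h2 := hdle u v
    omega
  -- inner products between distinct members of S, for index i
  have hKisum : ∀ u ∈ S, ∀ v ∈ S, u ≠ v →
      (A ^ d) u v = π' i * (∑ kk ∈ Finset.univ.filter (fun kk : V => eig kk = θ i),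
        U u kk * U v kk) := by
    intro u hu v hv huv
    rw [← hQj i u v, hpowent _ (hQmonic i) (hQdeg i) u v (hSdist u hu v hv huv)]
  -- Bound 1
  have hcard1 : S.card ≤ m i + 1 := by
    have hneg : ∀ a b : {x // x ∈ S}, a ≠ b →
        (∑ kk : {x // x ∈ Finset.univ.filter (fun kk : V => eig kk = θ i)},
          U a.1 kk.1 * U b.1 kk.1) < 0 := by
      intro a b hab
      have hne : a.1 ≠ b.1 := fun h => hab (Subtype.ext h)
      have hsum : (∑ kk : {x // x ∈ Finset.univ.filter (fun kk : V => eig kk = θ i)},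
          U a.1 kk.1 * U b.1 kk.1)
          = ∑ kk ∈ Finset.univ.filter (fun kk : V => eig kk = θ i), U a.1 kk * U b.1 kk := by
        exact Finset.sum_coe_sort (Finset.univ.filter (fun kk : V => eig kk = θ i))
          (fun kk => U a.1 kk * U b.1 kk)
      rw [hsum]
      have heq := hKisum a.1 a.2 b.1 b.2 hne
      have hpos := hApos a.1 b.1 (hSdist a.1 a.2 b.1 b.2 hne)
      have hπ'neg : π' i < 0 := by rw [hπodd]; linarith [hπapos i]
      by_contra hge
      push_neg at hge
      have hle0 : π' i * (∑ kk ∈ Finset.univ.filter (fun kk : V => eig kk = θ i),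
          U a.1 kk * U b.1 kk) ≤ 0 := mul_nonpos_of_nonpos_of_nonneg (le_of_lt hπ'neg) hge
      rw [← heq] at hle0
      linarith
    have hcb := card_le_of_pairwise_neg (fun (a : {x // x ∈ S})
      (kk : {x // x ∈ Finset.univ.filter (fun kk : V => eig kk = θ i)}) => U a.1 kk.1) hneg
    rw [Fintype.card_coe, Fintype.card_coe, hcount i] at hcb
    exact hcb
  constructor
  · rw [hkval]; omega
  -- Bound 2
  rw [hkval]
  have hgoal2 : (S.card : ℝ) ≤ 1 + (m i : ℝ) * πa i / πa 0 := by
    rcases Nat.eq_zero_or_pos S.card with hs0 | hspos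
    · rw [hs0]
      have h1 : 0 ≤ (m i : ℝ) * πa i / πa 0 := by
        apply div_nonneg (mul_nonneg (Nat.cast_nonneg _) (le_of_lt (hπapos i)))
          (le_of_lt (hπapos 0))
      push_cast
      linarith
    -- main case
    have hKey2 : ∀ u ∈ S, ∀ v ∈ S, u ≠ v →
        πa 0 ≤ (A ^ d) u v * (Fintype.card V : ℝ) := by
      intro u hu v hv huv
      have hd1 := hSdist u hu v hv huv
      have hreach : G.Reachable u v := SimpleGraph.Reachable.of_dist_ne_zero (by omega)
      have heq : (A ^ d) u v = π' 0 * (∑ kk ∈ Finset.univ.filter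
          (fun kk : V => eig kk = θ 0), U u kk * U v kk) := by
        rw [← hQj 0 u v, hpowent _ (hQmonic 0) (hQdeg 0) u v hd1]
      have hipv : (∑ kk ∈ Finset.univ.filter (fun kk : V => eig kk = θ 0), U u kk * U v kk)
          = ∑ kk ∈ Finset.univ.filter (fun kk : V => eig kk = θ 0), U u kk * U u kk := by
        refine Finset.sum_congr rfl fun kk hkk => ?_
        rw [← hperron kk (Finset.mem_filter.1 hkk).2 u v hreach]
      rw [heq, hipv, hπ'0, mul_assoc, hipdiag 0 u]
      have hm0' : (1:ℝ) ≤ (m 0 : ℝ) :=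
        Nat.one_le_cast.2 (Nat.pos_of_ne_zero (hm0 0))
      nlinarith [hπapos 0]
    have hPSD : (0:ℝ) ≤ ∑ u ∈ S, ∑ v ∈ S, (∑ kk ∈ Finset.univ.filter
        (fun kk : V => eig kk = θ i), U u kk * U v kk) := by
      have hswap : ∑ u ∈ S, ∑ v ∈ S, (∑ kk ∈ Finset.univ.filter
          (fun kk : V => eig kk = θ i), U u kk * U v kk)
          = ∑ kk ∈ Finset.univ.filter (fun kk : V => eig kk = θ i),
            (∑ u ∈ S, U u kk) * (∑ v ∈ S, U v kk) := by
        calc ∑ u ∈ S, ∑ v ∈ S, (∑ kk ∈ Finset.univ.filter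
            (fun kk : V => eig kk = θ i), U u kk * U v kk)
            = ∑ u ∈ S, ∑ kk ∈ Finset.univ.filter (fun kk : V => eig kk = θ i),
              ∑ v ∈ S, U u kk * U v kk :=
              Finset.sum_congr rfl fun u _ => Finset.sum_comm
          _ = ∑ kk ∈ Finset.univ.filter (fun kk : V => eig kk = θ i),
              ∑ u ∈ S, ∑ v ∈ S, U u kk * U v kk := Finset.sum_comm
          _ = ∑ kk ∈ Finset.univ.filter (fun kk : V => eig kk = θ i),
              (∑ u ∈ S, U u kk) * (∑ v ∈ S, U v kk) := by
              refine Finset.sum_congr rfl fun kk _ => ?_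
              rw [Finset.sum_mul_sum]
      rw [hswap]
      exact Finset.sum_nonneg fun kk _ => mul_self_nonneg _
    have hdouble : ∑ u ∈ S, ∑ v ∈ S, (∑ kk ∈ Finset.univ.filter
        (fun kk : V => eig kk = θ i), U u kk * U v kk)
        = (∑ u ∈ S, (∑ kk ∈ Finset.univ.filter (fun kk : V => eig kk = θ i), U u kk * U u kk))
          + ∑ u ∈ S, ∑ v ∈ S.erase u, (∑ kk ∈ Finset.univ.filter
            (fun kk : V => eig kk = θ i), U u kk * U v kk) := by
      rw [← Finset.sum_add_distrib]
      refine Finset.sum_congr rfl fun u hu => ?_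
      rw [add_comm]
      exact (Finset.sum_erase_add S _ hu).symm
    -- diagonal part
    have hdiagsum : (∑ u ∈ S, (∑ kk ∈ Finset.univ.filter
        (fun kk : V => eig kk = θ i), U u kk * U u kk)) * (Fintype.card V : ℝ)
        = (S.card : ℝ) * (m i : ℝ) := by
      rw [Finset.sum_mul]
      calc ∑ u ∈ S, (∑ kk ∈ Finset.univ.filter (fun kk : V => eig kk = θ i),
          U u kk * U u kk) * (Fintype.card V : ℝ)
          = ∑ u ∈ S, (m i : ℝ) := Finset.sum_congr rfl fun u _ => hipdiag i u
        _ = (S.card : ℝ) * (m i : ℝ) := by rw [Finset.sum_const, nsmul_eq_mul]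
    -- off-diagonal part
    have hoffb : (∑ u ∈ S, ∑ v ∈ S.erase u, (∑ kk ∈ Finset.univ.filter
        (fun kk : V => eig kk = θ i), U u kk * U v kk)) * (πa i * (Fintype.card V : ℝ))
        ≤ -((S.card : ℝ) * ((S.card : ℝ) - 1) * πa 0) := by
      rw [Finset.sum_mul]
      have hterm : ∀ u ∈ S, (∑ v ∈ S.erase u, (∑ kk ∈ Finset.univ.filter
          (fun kk : V => eig kk = θ i), U u kk * U v kk)) * (πa i * (Fintype.card V : ℝ))
          ≤ ((S.card : ℝ) - 1) * (-πa 0) := by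
        intro u hu
        rw [Finset.sum_mul]
        have hterm2 : ∀ v ∈ S.erase u, (∑ kk ∈ Finset.univ.filter
            (fun kk : V => eig kk = θ i), U u kk * U v kk) * (πa i * (Fintype.card V : ℝ))
            ≤ -πa 0 := by
          intro v hv
          have hvS := Finset.mem_of_mem_erase hv
          have hvu : u ≠ v := fun h => (Finset.mem_erase.1 hv).1 h.symm
          have heq := hKisum u hu v hvS hvu
          have h2 := hKey2 u hu v hvS hvu
          have h4 : (∑ kk ∈ Finset.univ.filter (fun kk : V => eig kk = θ i),
              U u kk * U v kk) * (πa i * (Fintype.card V : ℝ))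
              = -((A ^ d) u v * (Fintype.card V : ℝ)) := by
            rw [heq, hπodd]; ring
          rw [h4]
          linarith
        calc ∑ v ∈ S.erase u, (∑ kk ∈ Finset.univ.filter
            (fun kk : V => eig kk = θ i), U u kk * U v kk) * (πa i * (Fintype.card V : ℝ))
            ≤ ∑ _v ∈ S.erase u, -πa 0 := Finset.sum_le_sum hterm2
          _ = ((S.card : ℝ) - 1) * (-πa 0) := by
              rw [Finset.sum_const, nsmul_eq_mul, Finset.card_erase_of_mem hu]
              rw [Nat.cast_sub hspos, Nat.cast_one]
      calc ∑ u ∈ S, (∑ v ∈ S.erase u, (∑ kk ∈ Finset.univ.filter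
          (fun kk : V => eig kk = θ i), U u kk * U v kk)) * (πa i * (Fintype.card V : ℝ))
          ≤ ∑ _u ∈ S, ((S.card : ℝ) - 1) * (-πa 0) := Finset.sum_le_sum hterm
        _ = -((S.card : ℝ) * ((S.card : ℝ) - 1) * πa 0) := by
            rw [Finset.sum_const, nsmul_eq_mul]; ring
    -- combine
    have hfinal : (S.card : ℝ) * ((S.card : ℝ) - 1) * πa 0
        ≤ (S.card : ℝ) * ((m i : ℝ) * πa i) := by
      have h0 : (0:ℝ) ≤ (∑ u ∈ S, ∑ v ∈ S, (∑ kk ∈ Finset.univ.filter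
          (fun kk : V => eig kk = θ i), U u kk * U v kk)) * (πa i * (Fintype.card V : ℝ)) :=
        mul_nonneg hPSD (mul_nonneg (le_of_lt (hπapos i)) (le_of_lt hn))
      rw [hdouble, add_mul] at h0
      have hdiag2 : (∑ u ∈ S, (∑ kk ∈ Finset.univ.filter
          (fun kk : V => eig kk = θ i), U u kk * U u kk)) * (πa i * (Fintype.card V : ℝ))
          = (S.card : ℝ) * (m i : ℝ) * πa i := by
        calc (∑ u ∈ S, (∑ kk ∈ Finset.univ.filter
            (fun kk : V => eig kk = θ i), U u kk * U u kk)) * (πa i * (Fintype.card V : ℝ))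
            = ((∑ u ∈ S, (∑ kk ∈ Finset.univ.filter
              (fun kk : V => eig kk = θ i), U u kk * U u kk)) * (Fintype.card V : ℝ)) * πa i := by
              ring
          _ = (S.card : ℝ) * (m i : ℝ) * πa i := by rw [hdiagsum]
      rw [hdiag2] at h0
      nlinarith [hoffb]
    have hs1 : (1:ℝ) ≤ (S.card : ℝ) := Nat.one_le_cast.2 hspos
    have hdiv : ((S.card : ℝ) - 1) * πa 0 ≤ (m i : ℝ) * πa i := by
      have hscast : (0:ℝ) < (S.card : ℝ) := by linarith
      nlinarith [hfinal]
    have h5 : ((S.card : ℝ) - 1) ≤ (m i : ℝ) * πa i / πa 0 := by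
      rw [le_div_iff₀ (hπapos 0)]
      exact hdiv
    linarith
  have hrw : (∏ j ∈ Finset.univ.erase i, |θ i - θ j|) = πa i := rfl
  have hrw0 : (∏ j ∈ Finset.univ.erase (0 : Fin (d+1)), |θ 0 - θ j|) = πa 0 := rfl
  rw [hrw, hrw0]
  exact hgoal2
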